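/- Let μ : ℝ → ℝ be continuous with μ(0) = 0, and suppose there exists k > 0 such that for every ε with 0 < ε < k, μ(w) ≥ 0 for all w ∈ [−ε, 0] and the function w ↦ 1/μ(w) is not Lebesgue integrable on [−ε, 0]. Then μ is a minimal function, i.e. every differentiable w : [0,τ) → ℝ with w(0) = 0 and ẇ(t) = −μ(w(t)) for all t ∈ [0,τ) satisfies w(t) ≥ 0 for all t ∈ [0,τ). -/

import Mathlib

/-- Theorem 2, Case 4: a continuous `μ` with `μ(0) = 0` such that for some
`k > 0` and all `0 < ε < k`, `μ ≥ 0` on `[−ε, 0]` and `w ↦ 1/μ(w)` is not Lebesgue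
integrable on `[−ε, 0]`, is a minimal function. -/
theorem minimal_function_of_nonintegrable
    (μ : ℝ → ℝ) (hμc : Continuous μ) (hμ0 : μ 0 = 0)
    (hk : ∃ k > (0 : ℝ), ∀ ε : ℝ, 0 < ε → ε < k →
      (∀ v ∈ Set.Icc (-ε) (0 : ℝ), 0 ≤ μ v) ∧
      ¬ MeasureTheory.IntegrableOn (fun v => 1 / μ v) (Set.Icc (-ε) (0 : ℝ))
        MeasureTheory.volume)
    (τ : ℝ) (w : ℝ → ℝ) (hw0 : w 0 = 0)
    (hw : ∀ t ∈ Set.Ico (0 : ℝ) τ, HasDerivAt w (-μ (w t)) t) :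
    ∀ t ∈ Set.Ico (0 : ℝ) τ, 0 ≤ w t := by
  obtain ⟨k, hkpos, hke⟩ := hk
  by_contra hcon
  push_neg at hcon
  obtain ⟨t₁, ht₁, hwt₁⟩ := hcon
  have ht₁τ : t₁ < τ := ht₁.2
  have hwc : ∀ t ∈ Set.Ico (0 : ℝ) τ, ContinuousAt w t := fun t ht => (hw t ht).continuousAt
  have ht₁pos : 0 < t₁ := by
    rcases ht₁.1.lt_or_eq with h | h
    · exact h
    · exfalso; rw [← h, hw0] at hwt₁; exact lt_irrefl 0 hwt₁
  -- the set of zeros of w in [0, t₁]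
  set S : Set ℝ := Set.Icc 0 t₁ ∩ w ⁻¹' {0} with hSdef
  have hcoS : ContinuousOn w (Set.Icc 0 t₁) := fun t ht =>
    (hwc t ⟨ht.1, lt_of_le_of_lt ht.2 ht₁τ⟩).continuousWithinAt
  have hS0 : (0 : ℝ) ∈ S := ⟨⟨le_refl 0, ht₁pos.le⟩, hw0⟩
  have hSne : S.Nonempty := ⟨0, hS0⟩
  have hSbdd : BddAbove S := ⟨t₁, fun x hx => hx.1.2⟩
  have hSclosed : IsClosed S :=
    hcoS.preimage_isClosed_of_isClosed isClosed_Icc isClosed_singleton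
  set t₀ := sSup S with ht₀def
  have ht₀S : t₀ ∈ S := hSclosed.csSup_mem hSne hSbdd
  have hwt₀ : w t₀ = 0 := ht₀S.2
  have ht₀0 : 0 ≤ t₀ := ht₀S.1.1
  have ht₀t₁ : t₀ < t₁ := by
    rcases ht₀S.1.2.lt_or_eq with h | h
    · exact h
    · exfalso; rw [h] at hwt₀; rw [hwt₀] at hwt₁; exact lt_irrefl 0 hwt₁
  -- w is negative on (t₀, t₁]
  have hneg : ∀ t ∈ Set.Ioc t₀ t₁, w t < 0 := by
    intro t ht
    by_contra h
    push_neg at h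
    have h0mem : (0 : ℝ) ∈ Set.Icc (w t₁) (w t) := ⟨hwt₁.le, h⟩
    have hsub : Set.Icc (w t₁) (w t) ⊆ w '' Set.Icc t t₁ :=
      intermediate_value_Icc' ht.2 (hcoS.mono (Set.Icc_subset_Icc (ht₀0.trans ht.1.le) le_rfl))
    obtain ⟨s, hs, hws⟩ := hsub h0mem
    have hsS : s ∈ S := ⟨⟨ht₀0.trans (ht.1.le.trans hs.1), hs.2⟩, hws⟩
    have : s ≤ t₀ := le_csSup hSbdd hsS
    exact absurd (ht.1.trans_le hs.1) (not_lt.2 this)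
  -- fix ε
  set ε := k / 2 with hεdef
  have hεpos : 0 < ε := half_pos hkpos
  have hεk : ε < k := half_lt_self hkpos
  obtain ⟨hμnn, -⟩ := hke ε hεpos hεk
  -- pick t₂ ∈ (t₀, t₁] with w > -ε on [t₀, t₂]
  obtain ⟨h, hhpos, hball⟩ := Metric.continuousAt_iff.1
    (hwc t₀ ⟨ht₀0, lt_of_le_of_lt ht₀S.1.2 ht₁τ⟩) ε hεpos
  set t₂ := min t₁ (t₀ + h / 2) with ht₂def
  have ht₀t₂ : t₀ < t₂ := lt_min ht₀t₁ (by linarith)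
  have ht₂t₁ : t₂ ≤ t₁ := min_le_left _ _
  have hwlarge : ∀ t ∈ Set.Icc t₀ t₂, -ε < w t := by
    intro t ht
    have hd : dist t t₀ < h := by
      rw [Real.dist_eq, abs_of_nonneg (by linarith [ht.1])]
      have : t ≤ t₀ + h / 2 := ht.2.trans (min_le_right _ _)
      linarith
    have := hball hd
    rw [Real.dist_eq, hwt₀, sub_zero] at this
    have := abs_lt.1 this
    linarith [this.1]
  have hwle0 : ∀ t ∈ Set.Icc t₀ t₂, w t ≤ 0 := by
    intro t ht
    rcases ht.1.lt_or_eq with h' | h'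
    · exact (hneg t ⟨h', ht.2.trans ht₂t₁⟩).le
    · rw [← h', hwt₀]
  have hIccsub : Set.Icc t₀ t₂ ⊆ Set.Ico 0 τ := fun t ht =>
    ⟨ht₀0.trans ht.1, lt_of_le_of_lt (ht.2.trans ht₂t₁) ht₁τ⟩
  have hderiv : ∀ t ∈ Set.Icc t₀ t₂, HasDerivAt w (-μ (w t)) t := fun t ht =>
    hw t (hIccsub ht)
  have hμwnn : ∀ t ∈ Set.Icc t₀ t₂, 0 ≤ μ (w t) := fun t ht =>
    hμnn (w t) ⟨(hwlarge t ht).le, hwle0 t ht⟩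
  have hcoI : ContinuousOn w (Set.Icc t₀ t₂) := fun t ht =>
    (hwc t (hIccsub ht)).continuousWithinAt
  -- w is antitone on [t₀, t₂]
  have hanti : AntitoneOn w (Set.Icc t₀ t₂) := by
    apply antitoneOn_of_deriv_nonpos (convex_Icc _ _) hcoI
    · intro x hx
      rw [interior_Icc] at hx
      exact (hderiv x (Set.Ioo_subset_Icc_self hx)).differentiableAt.differentiableWithinAt
    · intro x hx
      rw [interior_Icc] at hx
      rw [(hderiv x (Set.Ioo_subset_Icc_self hx)).deriv]
      simpa using hμwnn x (Set.Ioo_subset_Icc_self hx)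
  set δ := -w t₂ with hδdef
  have hwt₂ : w t₂ = -δ := by rw [hδdef, neg_neg]
  have hδpos : 0 < δ := by
    have := hneg t₂ ⟨ht₀t₂, ht₂t₁⟩
    linarith
  have hδε : δ < ε := by
    have := hwlarge t₂ ⟨ht₀t₂.le, le_rfl⟩
    linarith
  have hδk : δ < k := hδε.trans hεk
  obtain ⟨hμnnδ, hnint⟩ := hke δ hδpos hδk
  apply hnint
  -- the good set s where μ ∘ w > 0
  set s : Set ℝ := Set.Ioo t₀ t₂ ∩ (fun t => μ (w t)) ⁻¹' Set.Ioi 0 with hsdef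
  have hcoμw : ContinuousOn (fun t => μ (w t)) (Set.Ioo t₀ t₂) := fun t ht =>
    (hμc.continuousAt.comp (hwc t (hIccsub (Set.Ioo_subset_Icc_self ht)))).continuousWithinAt
  have hs_open : IsOpen s := hcoμw.isOpen_inter_preimage isOpen_Ioo isOpen_Ioi
  have hssub : s ⊆ Set.Icc t₀ t₂ := fun t ht => Set.Ioo_subset_Icc_self ht.1
  have hder' : ∀ t ∈ s, HasDerivWithinAt w (-μ (w t)) s t := fun t ht =>
    (hderiv t (hssub ht)).hasDerivWithinAt
  -- injectivity of w on s
  have key : ∀ a ∈ s, ∀ b ∈ s, a < b → w a = w b → False := by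
    intro a ha b hb h hab
    have hconst : ∀ y ∈ Set.Icc a b, w y = w a := by
      intro y hy
      have h1 : w y ≤ w a := hanti (hssub ha) ⟨(ha.1.1.le.trans hy.1), hy.2.trans (hb.1.2.le)⟩ hy.1
      have h2 : w b ≤ w y := hanti ⟨(ha.1.1.le.trans hy.1), hy.2.trans (hb.1.2.le)⟩ (hssub hb) hy.2
      rw [← hab] at h2
      exact le_antisymm h1 h2
    have hd1 : HasDerivWithinAt w (-μ (w a)) (Set.Icc a b) a :=
      (hderiv a (hssub ha)).hasDerivWithinAt
    have hd2 : HasDerivWithinAt w 0 (Set.Icc a b) a :=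
      (hasDerivWithinAt_const a (Set.Icc a b) (w a)).congr hconst (hconst a ⟨le_rfl, h.le⟩)
    have hu : UniqueDiffWithinAt ℝ (Set.Icc a b) a := uniqueDiffOn_Icc h a ⟨le_rfl, h.le⟩
    have e1 : derivWithin w (Set.Icc a b) a = -μ (w a) := hd1.derivWithin hu
    have e2 : derivWithin w (Set.Icc a b) a = 0 := hd2.derivWithin hu
    have : μ (w a) = 0 := by rw [e1] at e2; linarith
    have : (0 : ℝ) < μ (w a) := ha.2
    linarith
  have hInj : Set.InjOn w s := by
    intro a ha b hb hab
    rcases lt_trichotomy a b with h | h | h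
    · exact absurd (key a ha b hb h hab) not_false
    · exact h
    · exact absurd (key b hb a ha h hab.symm) not_false
  -- change of variables: 1/μ is integrable on w '' s
  have hint1 : MeasureTheory.IntegrableOn (fun t => |(-μ (w t))| • (1 / μ (w t))) s
      MeasureTheory.volume := by
    have hfin : MeasureTheory.volume s < ⊤ :=
      lt_of_le_of_lt (MeasureTheory.measure_mono (Set.inter_subset_left))
        measure_Ioo_lt_top
    have hc : MeasureTheory.IntegrableOn (fun _ : ℝ => (1 : ℝ)) s MeasureTheory.volume :=
      MeasureTheory.integrableOn_const hfin.ne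
    apply hc.congr_fun _ hs_open.measurableSet
    intro t ht
    have hpos : (0 : ℝ) < μ (w t) := ht.2
    show (1 : ℝ) = |(-μ (w t))| • (1 / μ (w t))
    rw [abs_neg, abs_of_pos hpos, smul_eq_mul, mul_one_div, div_self (ne_of_gt hpos)]
  have himg : MeasureTheory.IntegrableOn (fun v => 1 / μ v) (w '' s) MeasureTheory.volume :=
    (MeasureTheory.integrableOn_image_iff_integrableOn_abs_deriv_smul
      hs_open.measurableSet hder' hInj (fun v => 1 / μ v)).2 hint1
  -- cover Icc (-δ) 0
  rw [integrableOn_Icc_iff_integrableOn_Ioo]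
  set A : Set ℝ := Set.Ioo (-δ) 0 ∩ μ ⁻¹' Set.Ioi 0 with hAdef
  set B : Set ℝ := Set.Ioo (-δ) 0 \ μ ⁻¹' Set.Ioi 0 with hBdef
  have hAB : A ∪ B = Set.Ioo (-δ) 0 := Set.inter_union_diff _ _
  have hAsub : A ⊆ w '' s := by
    rintro v ⟨hv, hμv⟩
    have hvmem : v ∈ Set.Icc (w t₂) (w t₀) := by
      rw [hwt₂, hwt₀]; exact ⟨hv.1.le, hv.2.le⟩
    obtain ⟨t, ht, hwt⟩ := intermediate_value_Icc' ht₀t₂.le hcoI hvmem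
    refine ⟨t, ⟨⟨?_, ?_⟩, ?_⟩, hwt⟩
    · rcases ht.1.lt_or_eq with h' | h'
      · exact h'
      · exfalso; rw [← h', hwt₀] at hwt; exact absurd hwt.symm (ne_of_lt hv.2)
    · rcases ht.2.lt_or_eq with h' | h'
      · exact h'
      · exfalso; rw [h', hwt₂] at hwt; exact absurd hwt (ne_of_lt hv.1)
    · show (0 : ℝ) < μ (w t); rw [hwt]; exact hμv
  have hIA : MeasureTheory.IntegrableOn (fun v => 1 / μ v) A MeasureTheory.volume :=
    himg.mono_set hAsub
  have hBmeas : MeasurableSet B :=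
    measurableSet_Ioo.diff ((isOpen_Ioi.preimage hμc).measurableSet)
  have hIB : MeasureTheory.IntegrableOn (fun v => 1 / μ v) B MeasureTheory.volume := by
    have hz : MeasureTheory.IntegrableOn (fun _ : ℝ => (0 : ℝ)) B MeasureTheory.volume :=
      MeasureTheory.integrableOn_zero
    apply hz.congr_fun _ hBmeas
    intro v hv
    have h1 : 0 ≤ μ v := hμnnδ v ⟨hv.1.1.le, hv.1.2.le⟩
    have h2 : ¬ (0 : ℝ) < μ v := hv.2
    have h3 : μ v = 0 := le_antisymm (not_lt.1 h2) h1
    show (0 : ℝ) = 1 / μ v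
    rw [h3, div_zero]
  have := hIA.union hIB
  rwa [hAB] at this
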